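/- Let ξ₀ ∈ B_R(0), let ξ = (0,0,t₀) ∈ Π_{ξ₀}, where ξ₀ = (x₀,y₀,t₀), and let λ > 0 be such that ξ' = ξ₀∘δ_λ(ξ₀⁻¹∘ξ) ∈ ∂B_R(0). Then λ ≥ 2; consequently, if u is H-convex in B_R(0) with u = 0 on ∂B_R(0), then u(0,0,t₀) ≤ ½ u(ξ₀). -/
import Mathlib


noncomputable section

abbrev H1 := ℝ × ℝ × ℝ

/-- Heisenberg group multiplication: ξ₀∘ξ = (x₀+x, y₀+y, t₀+t+2(x y₀ - y x₀)). -/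
def hmul (a b : H1) : H1 :=
  (a.1 + b.1, a.2.1 + b.2.1, a.2.2 + b.2.2 + 2 * (b.1 * a.2.1 - b.2.1 * a.1))

def hinv (a : H1) : H1 := (-a.1, -a.2.1, -a.2.2)

/-- r = (x²+y²)² + t². -/
def rfun (a : H1) : ℝ := (a.1 ^ 2 + a.2.1 ^ 2) ^ 2 + a.2.2 ^ 2

/-- The Heisenberg gauge ρ(x,y,t) = ((x²+y²)²+t²)^(1/4). -/
def hgauge (a : H1) : ℝ := rfun a ^ ((1 : ℝ) / 4)

/-- d(ξ,ξ₀) = ρ(ξ₀⁻¹ ∘ ξ). -/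
def hdist (a b : H1) : ℝ := hgauge (hmul (hinv b) a)

/-- Heisenberg dilations. -/
def dil (l : ℝ) (a : H1) : H1 := (l * a.1, l * a.2.1, l ^ 2 * a.2.2)

/-- X = ∂_x + 2y ∂_t. -/
def Xop (f : H1 → ℝ) (p : H1) : ℝ :=
  fderiv ℝ f p (1, 0, 0) + 2 * p.2.1 * fderiv ℝ f p (0, 0, 1)

/-- Y = ∂_y - 2x ∂_t. -/
def Yop (f : H1 → ℝ) (p : H1) : ℝ :=
  fderiv ℝ f p (0, 1, 0) - 2 * p.1 * fderiv ℝ f p (0, 0, 1)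

/-- T = ∂_t. -/
def Tder (f : H1 → ℝ) (p : H1) : ℝ := fderiv ℝ f p (0, 0, 1)

/-- (XYu + YXu)/2. -/
def symXY (f : H1 → ℝ) (p : H1) : ℝ := (Xop (Yop f) p + Yop (Xop f) p) / 2

/-- det of the symmetrized horizontal Hessian. -/
def detH (u : H1 → ℝ) (p : H1) : ℝ :=
  Xop (Xop u) p * Yop (Yop u) p - symXY u p ^ 2

/-- Positive semidefiniteness of the symmetrized horizontal Hessian at p. -/
def PSDat (u : H1 → ℝ) (p : H1) : Prop :=
  ∀ h : ℝ × ℝ,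
    0 ≤ Xop (Xop u) p * h.1 ^ 2 + 2 * symXY u p * h.1 * h.2 + Yop (Yop u) p * h.2 ^ 2

/-- The horizontal plane Π_{ξ₀}. -/
def hplane (a : H1) : Set H1 :=
  {p | p.2.2 - a.2.2 - 2 * (p.1 * a.2.1 - p.2.1 * a.1) = 0}

/-- H-convexity of a continuous function on a set, via convexity along horizontal planes. -/
def HConvexSet (S : Set H1) (u : H1 → ℝ) : Prop :=
  ContinuousOn u S ∧
  ∀ a ∈ S, ∀ b ∈ S, b ∈ hplane a → ∀ l ∈ Set.Icc (0 : ℝ) 1,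
    hmul a (dil l (hmul (hinv a) b)) ∈ S →
    u (hmul a (dil l (hmul (hinv a) b))) ≤ u a + l * (u b - u a)


lemma rfun_nonneg (a : H1) : 0 ≤ rfun a := by unfold rfun; positivity

lemma hgauge_nonneg (a : H1) : 0 ≤ hgauge a := Real.rpow_nonneg (rfun_nonneg a) _

lemma hgauge_pow (a : H1) : hgauge a ^ (4 : ℕ) = rfun a := by
  unfold hgauge
  rw [← Real.rpow_natCast _ 4, ← Real.rpow_mul (rfun_nonneg a)]
  norm_num

lemma hgauge_eq_iff (a : H1) {R : ℝ} (hR : 0 < R) : hgauge a = R ↔ rfun a = R ^ 4 := by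
  constructor
  · intro h; rw [← hgauge_pow, h]
  · intro h
    unfold hgauge
    rw [h, show (R:ℝ)^4 = R ^ ((4:ℕ):ℝ) by rw [Real.rpow_natCast],
      ← Real.rpow_mul hR.le]
    norm_num

lemma hgauge_le_of (a : H1) {R : ℝ} (hR : 0 ≤ R) (h : rfun a ≤ R ^ 4) : hgauge a ≤ R := by
  have h2 : hgauge a ≤ (R ^ 4) ^ ((1:ℝ)/4) :=
    Real.rpow_le_rpow (rfun_nonneg a) h (by norm_num)
  rwa [show (R:ℝ)^4 = R ^ ((4:ℕ):ℝ) by rw [Real.rpow_natCast],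
    ← Real.rpow_mul hR, show ((4:ℕ):ℝ) * (1/4) = 1 by norm_num, Real.rpow_one] at h2

/-- Key lemma, part (1): for ξ₀ ∈ B_R(0) and ξ = (0,0,t₀) one has λ ≥ 2,
and consequently u(ξ) ≤ ½ u(ξ₀) for H-convex u vanishing on ∂B_R(0). -/
theorem stmt_15 (R : ℝ) (hR : 0 < R) (ξ₀ : H1) (hξ₀ : hgauge ξ₀ < R)
    (ξ : H1) (hξ : ξ = ((0 : ℝ), (0 : ℝ), ξ₀.2.2))
    (l : ℝ) (hl : 0 < l)
    (hbdry : hgauge (hmul ξ₀ (dil l (hmul (hinv ξ₀) ξ))) = R) :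
    2 ≤ l ∧
    ∀ u : H1 → ℝ, HConvexSet {p : H1 | hgauge p ≤ R} u →
      (∀ p : H1, hgauge p = R → u p = 0) →
      u ξ ≤ u ξ₀ / 2 := by
  obtain ⟨x, y, t⟩ := ξ₀
  subst hξ
  simp only at hbdry ⊢
  -- the dilated point
  have hξ'_eq : hmul (x, y, t) (dil l (hmul (hinv (x, y, t)) ((0:ℝ), (0:ℝ), t)))
      = ((1 - l) * x, (1 - l) * y, t) := by
    simp only [hmul, hinv, dil, Prod.mk.injEq]
    refine ⟨by ring, by ring, by ring⟩
  rw [hξ'_eq] at hbdry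
  have hr' : rfun ((1 - l) * x, (1 - l) * y, t) = R ^ 4 :=
    (hgauge_eq_iff _ hR).mp hbdry
  have hr2 : (1 - l) ^ 4 * (x ^ 2 + y ^ 2) ^ 2 + t ^ 2 = R ^ 4 := by
    rw [← hr']; unfold rfun; ring
  have h0 : (x ^ 2 + y ^ 2) ^ 2 + t ^ 2 < R ^ 4 := by
    have := pow_lt_pow_left₀ hξ₀ (hgauge_nonneg _) (n := 4) (by norm_num)
    rw [hgauge_pow] at this
    unfold rfun at this
    simpa using this
  have hM : 0 ≤ (x ^ 2 + y ^ 2) ^ 2 := by positivity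
  have hl2 : 2 ≤ l := by
    by_contra hcon
    push_neg at hcon
    have hfac : (1 - l) ^ 4 - 1 = l * (l - 2) * ((1 - l) ^ 2 + 1) := by ring
    have h1 : l * (l - 2) ≤ 0 :=
      mul_nonpos_of_nonneg_of_nonpos hl.le (by linarith)
    have h2 : (1 - l) ^ 4 - 1 ≤ 0 := by
      rw [hfac]
      exact mul_nonpos_of_nonpos_of_nonneg h1 (by positivity)
    nlinarith [mul_nonneg hM (sub_nonneg.mpr (by linarith : (1 - l) ^ 4 ≤ 1))]
  refine ⟨hl2, ?_⟩
  intro u hconv hzero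
  obtain ⟨-, hc⟩ := hconv
  have hl1 : (0:ℝ) < l - 1 := by linarith
  set ξ' : H1 := ((1 - l) * x, (1 - l) * y, t) with hξ'
  set ξ'' : H1 := ((l - 1) * x, (l - 1) * y, t) with hξ''
  have hr'' : rfun ξ'' = R ^ 4 := by
    rw [← hr']; unfold rfun; ring
  have hb'' : hgauge ξ'' = R := (hgauge_eq_iff _ hR).mpr hr''
  have hu' : u ξ' = 0 := hzero _ hbdry
  have hu'' : u ξ'' = 0 := hzero _ hb''
  have hmem' : ξ' ∈ {p : H1 | hgauge p ≤ R} := le_of_eq hbdry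
  have hmem'' : ξ'' ∈ {p : H1 | hgauge p ≤ R} := le_of_eq hb''
  have hmem₀ : ((x, y, t) : H1) ∈ {p : H1 | hgauge p ≤ R} := le_of_lt hξ₀
  have hmemξ : (((0:ℝ), (0:ℝ), t) : H1) ∈ {p : H1 | hgauge p ≤ R} := by
    refine hgauge_le_of _ hR.le ?_
    have : rfun ((0:ℝ), (0:ℝ), t) ≤ (x ^ 2 + y ^ 2) ^ 2 + t ^ 2 := by
      unfold rfun; simp; positivity
    linarith
  -- Step B: u ξ₀ ≤ 0
  set μ : ℝ := l / (2 * (l - 1)) with hμ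
  have hμnn : 0 ≤ μ := by positivity
  have hμle : μ ≤ 1 := by
    rw [hμ, div_le_one (by linarith)]
    linarith
  have hpt1 : hmul ξ' (dil μ (hmul (hinv ξ') ξ'')) = ((x, y, t) : H1) := by
    simp only [hξ', hξ'', hμ, hmul, hinv, dil, Prod.mk.injEq]
    refine ⟨?_, ?_, ?_⟩ <;> field_simp <;> ring
  have hplane1 : ξ'' ∈ hplane ξ' := by
    simp only [hξ', hξ'', hplane, Set.mem_setOf_eq]
    ring
  have hB := hc ξ' hmem' ξ'' hmem'' hplane1 μ ⟨hμnn, hμle⟩ (by rw [hpt1]; exact hmem₀)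
  rw [hpt1] at hB
  have hu₀ : u (x, y, t) ≤ 0 := by
    rw [hu', hu''] at hB
    simpa using hB
  -- Step C
  have hpt2 : hmul (x, y, t) (dil (1 / l) (hmul (hinv (x, y, t)) ξ'))
      = (((0:ℝ), (0:ℝ), t) : H1) := by
    simp only [hξ', hmul, hinv, dil, Prod.mk.injEq]
    refine ⟨?_, ?_, ?_⟩ <;> field_simp <;> ring
  have hplane2 : ξ' ∈ hplane ((x, y, t) : H1) := by
    simp only [hξ', hplane, Set.mem_setOf_eq]
    ring
  have hCicc : (1 / l) ∈ Set.Icc (0:ℝ) 1 := by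
    constructor
    · positivity
    · rw [div_le_one hl]; linarith
  have hC := hc (x, y, t) hmem₀ ξ' hmem' hplane2 (1 / l) hCicc (by rw [hpt2]; exact hmemξ)
  rw [hpt2, hu'] at hC
  have hhalf : (1 / 2 - 1 / l) * u (x, y, t) ≤ 0 := by
    apply mul_nonpos_of_nonneg_of_nonpos _ hu₀
    have : 1 / l ≤ 1 / 2 := by
      rw [div_le_div_iff₀ hl (by norm_num)]; linarith
    linarith
  nlinarith [hC, hhalf]
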